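/- Under the assumptions of the relaxed Armijo line search lemma, if the accepted step size additionally satisfies α_k ≥ τᾱ for a backtracking factor τ ∈ (0,1), then the decrease φ(x_{k+1}) ≤ φ(x_k) − c₁ τ ᾱ (1−θ)² ‖∇φ(x_k)‖² + 4ε_f holds. -/
import Mathlib


open scoped RealInnerProductSpace

/-- under the relaxed-Armijo line search hypotheses, if the accepted
step size satisfies `τᾱ ≤ α_k ≤ ᾱ`, then
`φ(x_{k+1}) ≤ φ(x_k) - c₁ τ ᾱ (1-θ)² ‖∇φ(x_k)‖² + 4 ε_f`. -/
theorem armijo_decrease_phi {n : ℕ}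
    (φ f : EuclideanSpace ℝ (Fin n) → ℝ)
    (gradφ : EuclideanSpace ℝ (Fin n) → EuclideanSpace ℝ (Fin n))
    (L εf c₁ θ τ α abar : ℝ) (xk g : EuclideanSpace ℝ (Fin n))
    (hL : 0 < L)
    (hsmooth : ∀ x y, φ y ≤ φ x + ⟪gradφ x, y - x⟫ + L / 2 * ‖y - x‖ ^ 2)
    (hnoise : ∀ y, |f y - φ y| ≤ εf)
    (hεf : 0 ≤ εf)
    (hθ0 : 0 ≤ θ) (hθ : θ < 1 / 2)
    (hc₁0 : 0 < c₁) (hc₁1 : c₁ < 1)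
    (hτ0 : 0 < τ) (hτ1 : τ < 1)
    (habar : abar = 2 * (1 - 2 * θ - c₁ * (1 - θ)) / (L * (1 - θ)))
    (habar_pos : 0 < abar)
    (hnorm : ‖g - gradφ xk‖ ≤ θ * ‖gradφ xk‖)
    (hαlo : τ * abar ≤ α) (hαhi : α ≤ abar)
    (harmijo : f (xk - α • g) ≤ f xk - c₁ * α * ‖g‖ ^ 2 + 2 * εf) :
    φ (xk - α • g) ≤ φ xk - c₁ * τ * abar * (1 - θ) ^ 2 * ‖gradφ xk‖ ^ 2 + 4 * εf := by
  have h1 := abs_le.1 (hnoise (xk - α • g))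
  have h2 := abs_le.1 (hnoise xk)
  have hgn : (1 - θ) * ‖gradφ xk‖ ≤ ‖g‖ := by
    have := norm_sub_norm_le (gradφ xk) g
    have h := norm_sub_rev g (gradφ xk) ▸ hnorm
    nlinarith [norm_nonneg (gradφ xk)]
  have hgn0 : 0 ≤ (1 - θ) * ‖gradφ xk‖ := by
    have := norm_nonneg (gradφ xk); nlinarith
  have hsq : ((1 - θ) * ‖gradφ xk‖) ^ 2 ≤ ‖g‖ ^ 2 := by
    exact pow_le_pow_left₀ hgn0 hgn 2
  have hα0 : 0 < α := lt_of_lt_of_le (by positivity) hαlo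
  have key : c₁ * τ * abar * (1 - θ) ^ 2 * ‖gradφ xk‖ ^ 2 ≤ c₁ * α * ‖g‖ ^ 2 := by
    have h3 : c₁ * (τ * abar) * ((1 - θ) * ‖gradφ xk‖) ^ 2 ≤ c₁ * α * ‖g‖ ^ 2 := by
      apply mul_le_mul _ hsq (by positivity) (by positivity)
      nlinarith
    nlinarith [h3]
  linarith [h1.1, h1.2, h2.1, h2.2, harmijo, key]
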